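/- Let q = (q_1, ..., q_n) be a vector of non-negative integers interpreted as bins of indistinguishable balls, let h ≥ 1 and w > h. Then C(n - h, w - h) times the number of ways to pick h balls from exactly h distinct bins of q equals the sum over all ways of picking w balls from at least h distinct bins of q of the number of ways of picking h of those w balls coming from exactly h bins, with coefficients depending only on the partition type of the selection and not on q. -/

import Mathlib

open scoped BigOperators

lemma sum_AT_succ {M : Type*} [AddCommMonoid M] (n m : ℕ) (F : (Fin (n+1) → ℕ) → M) :
    ∑ k ∈ Finset.Nat.antidiagonalTuple (n+1) m, F k
      = ∑ p ∈ Finset.HasAntidiagonal.antidiagonal m, ∑ k ∈ Finset.Nat.antidiagonalTuple n p.2,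
          F (Fin.cons p.1 k) := by
  rw [← Finset.sum_sigma (Finset.HasAntidiagonal.antidiagonal m)
      (fun p => Finset.Nat.antidiagonalTuple n p.2)
      (fun x => F (Fin.cons x.1.1 x.2))]
  refine Finset.sum_nbij' (fun (k : Fin (n+1) → ℕ) =>
      (⟨(k 0, ∑ i : Fin n, k i.succ), Fin.tail k⟩ : Σ _p : ℕ × ℕ, Fin n → ℕ))
    (fun x => Fin.cons x.1.1 x.2) ?_ ?_ ?_ ?_ ?_
  · intro k hk
    rw [Finset.Nat.mem_antidiagonalTuple] at hk
    simp only [Finset.mem_sigma, Finset.Nat.mem_antidiagonalTuple, Finset.HasAntidiagonal.mem_antidiagonal]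
    exact ⟨by rw [← hk, Fin.sum_univ_succ], rfl⟩
  · intro x hx
    rw [Finset.mem_sigma, Finset.Nat.mem_antidiagonalTuple] at hx
    rw [Finset.Nat.mem_antidiagonalTuple, Fin.sum_univ_succ]
    simp only [Fin.cons_zero, Fin.cons_succ]
    rw [hx.2]
    exact (Finset.HasAntidiagonal.mem_antidiagonal.mp hx.1)
  · intro k _; exact Fin.cons_self_tail k
  · intro x hx
    rw [Finset.mem_sigma, Finset.Nat.mem_antidiagonalTuple] at hx
    refine Sigma.ext ?_ (heq_of_eq ?_)
    · simp only [Fin.cons_zero, Fin.cons_succ]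
      exact Prod.ext rfl hx.2
    · ext i; simp [Fin.tail]
  · intro k _; rw [Fin.cons_self_tail]

lemma vandermonde_tuple : ∀ (n : ℕ) (q : Fin n → ℕ) (m : ℕ),
    ∑ k ∈ Finset.Nat.antidiagonalTuple n m, ∏ i, (q i).choose (k i)
      = (∑ i, q i).choose m := by
  intro n
  induction n with
  | zero => intro q m; cases m <;> simp
  | succ n ih =>
    intro q m
    rw [sum_AT_succ]
    rw [Fin.sum_univ_succ, Nat.add_choose_eq]
    refine Finset.sum_congr rfl fun p _ => ?_
    simp_rw [Fin.prod_univ_succ, Fin.cons_zero, Fin.cons_succ]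
    rw [← Finset.mul_sum, ih]

lemma key_lemma (n h w : ℕ) (hw : h < w) (q : Fin n → ℕ)
    (S : Finset (Fin n)) (hS : S.card = h) :
    ∑ k ∈ Finset.Nat.antidiagonalTuple n w,
        (∏ i, (q i).choose (k i)) * ∏ i ∈ S, k i
      = ((∑ i, q i) - h).choose (w - h) * ∏ i ∈ S, q i := by
  by_cases hq : ∃ i ∈ S, q i = 0
  · obtain ⟨i0, hi0, hq0⟩ := hq
    rw [Finset.prod_eq_zero hi0 hq0, mul_zero]
    refine Finset.sum_eq_zero fun k hk => ?_
    rcases Nat.eq_zero_or_pos (k i0) with h0 | h0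
    · rw [Finset.prod_eq_zero hi0 h0, mul_zero]
    · rw [Finset.prod_eq_zero (Finset.mem_univ i0)
        (by rw [hq0]; exact Nat.choose_eq_zero_of_lt h0), zero_mul]
  · push_neg at hq
    have hq1 : ∀ i ∈ S, 1 ≤ q i := fun i hi => Nat.one_le_iff_ne_zero.mpr (hq i hi)
    obtain ⟨q', hq'⟩ : ∃ q' : Fin n → ℕ, q' = fun i => if i ∈ S then q i - 1 else q i := ⟨_, rfl⟩
    have hindic : ∑ i : Fin n, (if i ∈ S then 1 else 0) = h := by
      rw [Finset.sum_ite_mem, Finset.univ_inter]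
      simp [hS]
    have hsum' : ∑ i, q' i = (∑ i, q i) - h := by
      have e1 : ∑ i, q i = ∑ i, (q' i + if i ∈ S then 1 else 0) := by
        refine Finset.sum_congr rfl fun i _ => ?_
        by_cases hi : i ∈ S
        · have := hq1 i hi
          simp only [hq', if_pos hi]
          omega
        · simp [hq', hi]
      rw [Finset.sum_add_distrib, hindic] at e1
      omega
    have hfilter : ∑ k ∈ Finset.Nat.antidiagonalTuple n w,
          (∏ i, (q i).choose (k i)) * ∏ i ∈ S, k i
        = ∑ k ∈ (Finset.Nat.antidiagonalTuple n w).filter (fun k => ∀ i ∈ S, k i ≠ 0),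
          (∏ i, (q i).choose (k i)) * ∏ i ∈ S, k i := by
      refine (Finset.sum_filter_of_ne fun k _ hne i hi h0 => ?_).symm
      exact hne (by rw [Finset.prod_eq_zero hi h0, mul_zero])
    have hbij : ∑ k ∈ (Finset.Nat.antidiagonalTuple n w).filter (fun k => ∀ i ∈ S, k i ≠ 0),
          (∏ i, (q i).choose (k i)) * ∏ i ∈ S, k i
        = ∑ k' ∈ Finset.Nat.antidiagonalTuple n (w - h),
          (∏ i, (q i).choose (k' i + if i ∈ S then 1 else 0)) * ∏ i ∈ S, (k' i + 1) := by
      clear hfilter hsum' hq hq1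
      refine Finset.sum_nbij' (fun (k : Fin n → ℕ) j => k j - if j ∈ S then 1 else 0)
        (fun (k' : Fin n → ℕ) j => k' j + if j ∈ S then 1 else 0) ?_ ?_ ?_ ?_ ?_
      · intro k hk
        rw [Finset.mem_filter, Finset.Nat.mem_antidiagonalTuple] at hk
        rw [Finset.Nat.mem_antidiagonalTuple]
        have e1 : ∑ j, ((k j - if j ∈ S then 1 else 0) + if j ∈ S then 1 else 0)
            = ∑ j, k j := by
          refine Finset.sum_congr rfl fun j _ => ?_
          by_cases hj : j ∈ S
          · have := hk.2 j hj; simp only [if_pos hj]; omega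
          · simp [hj]
        have e2 : ∑ j, (k j - if j ∈ S then 1 else 0) = w - h := by
          rw [Finset.sum_add_distrib, hindic, hk.1] at e1
          omega
        exact e2
      · intro k' hk'
        rw [Finset.Nat.mem_antidiagonalTuple] at hk'
        simp only [Finset.mem_filter, Finset.Nat.mem_antidiagonalTuple]
        refine ⟨?_, fun i hi => by simp [if_pos hi]⟩
        rw [Finset.sum_add_distrib, hindic, hk']
        omega
      · intro k hk
        rw [Finset.mem_filter] at hk
        funext j
        show (k j - if j ∈ S then 1 else 0) + (if j ∈ S then 1 else 0) = k j
        by_cases hj : j ∈ S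
        · have := hk.2 j hj; simp only [if_pos hj]; omega
        · simp [hj]
      · intro k' _
        funext j
        show (k' j + if j ∈ S then 1 else 0) - (if j ∈ S then 1 else 0) = k' j
        by_cases hj : j ∈ S <;> simp [hj]
      · intro k hk
        rw [Finset.mem_filter] at hk
        show _ = (∏ i, (q i).choose ((k i - if i ∈ S then 1 else 0) + if i ∈ S then 1 else 0))
            * ∏ i ∈ S, ((k i - if i ∈ S then 1 else 0) + 1)
        congr 1
        · refine Finset.prod_congr rfl fun i _ => ?_
          by_cases hi : i ∈ S
          · have := hk.2 i hi; simp only [if_pos hi]; congr 1; omega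
          · simp [hi]
        · refine Finset.prod_congr rfl fun i hi => ?_
          have := hk.2 i hi
          simp only [if_pos hi]
          omega
    have hval : ∀ k' : Fin n → ℕ,
        (∏ i, (q i).choose (k' i + if i ∈ S then 1 else 0)) * ∏ i ∈ S, (k' i + 1)
          = (∏ i ∈ S, q i) * ∏ i, (q' i).choose (k' i) := by
      intro k'
      rw [← Finset.prod_mul_prod_compl S (fun i => (q i).choose (k' i + if i ∈ S then 1 else 0)),
          ← Finset.prod_mul_prod_compl S (fun i => (q' i).choose (k' i))]
      have e2 : ∏ i ∈ Sᶜ, (q i).choose (k' i + if i ∈ S then 1 else 0)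
          = ∏ i ∈ Sᶜ, (q' i).choose (k' i) := by
        refine Finset.prod_congr rfl fun i hi => ?_
        have hi' : i ∉ S := Finset.mem_compl.mp hi
        simp [hq', hi']
      rw [e2, mul_right_comm, ← Finset.prod_mul_distrib]
      have e3 : ∏ i ∈ S, (q i).choose (k' i + if i ∈ S then 1 else 0) * (k' i + 1)
          = ∏ i ∈ S, q i * (q' i).choose (k' i) := by
        refine Finset.prod_congr rfl fun i hi => ?_
        have h1 : q i - 1 + 1 = q i := Nat.succ_pred_eq_of_pos (hq1 i hi)
        have h2 := Nat.add_one_mul_choose_eq (q i - 1) (k' i)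
        rw [if_pos hi]
        simp only [hq', if_pos hi]
        simp only [Nat.succ_eq_add_one, h1] at h2
        exact h2.symm
      rw [e3, Finset.prod_mul_distrib, mul_assoc]
    rw [hfilter, hbij]
    calc ∑ k' ∈ Finset.Nat.antidiagonalTuple n (w - h),
          (∏ i, (q i).choose (k' i + if i ∈ S then 1 else 0)) * ∏ i ∈ S, (k' i + 1)
        = ∑ k' ∈ Finset.Nat.antidiagonalTuple n (w - h),
          (∏ i ∈ S, q i) * ∏ i, (q' i).choose (k' i) := by
          exact Finset.sum_congr rfl fun k' _ => hval k'
      _ = (∏ i ∈ S, q i) * ∑ k' ∈ Finset.Nat.antidiagonalTuple n (w - h),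
            ∏ i, (q' i).choose (k' i) := by rw [Finset.mul_sum]
      _ = ((∑ i, q i) - h).choose (w - h) * ∏ i ∈ S, q i := by
          rw [vandermonde_tuple, hsum', mul_comm]

/-- The overcounting identity of Proposition 4: for bins `q ∈ ℕ^n` and
`1 ≤ h < w`,
`C(Σq - h, w - h) · N_h(q) = Σ_{wt(k)=w, |supp k| ≥ h} (∏ C(q_i,k_i)) · d(k,h)`,
where `N_h(q) = Σ_{|S|=h} ∏_{i∈S} q_i` counts ways to pick `h` balls from
exactly `h` distinct bins, and `d(k,h) = Σ_{S ⊆ supp k, |S|=h} ∏_{i∈S} k_i`. -/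
theorem stmt_16 (n h w : ℕ) (hh : 1 ≤ h) (hw : h < w) (q : Fin n → ℕ) :
    ((∑ i, q i) - h).choose (w - h) *
        (∑ S ∈ Finset.powersetCard h (Finset.univ : Finset (Fin n)),
          ∏ i ∈ S, q i)
      = ∑ k ∈ (Finset.Nat.antidiagonalTuple n w).filter
            (fun k => h ≤ (Finset.univ.filter fun i => k i ≠ 0).card),
          (∏ i, (q i).choose (k i)) *
            (∑ S ∈ Finset.powersetCard h (Finset.univ.filter fun i => k i ≠ 0),
              ∏ i ∈ S, k i) := by
  have hvanish : ∀ k ∈ Finset.Nat.antidiagonalTuple n w,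
      (∏ i, (q i).choose (k i)) *
        (∑ S ∈ Finset.powersetCard h (Finset.univ.filter fun i => k i ≠ 0),
          ∏ i ∈ S, k i) ≠ 0 →
      h ≤ (Finset.univ.filter fun i => k i ≠ 0).card := by
    intro k _ hne
    by_contra hlt
    push_neg at hlt
    apply hne
    rw [Finset.powersetCard_eq_empty.mpr hlt, Finset.sum_empty, mul_zero]
  rw [Finset.sum_filter_of_ne hvanish]
  have hinner : ∀ k : Fin n → ℕ,
      ∑ S ∈ Finset.powersetCard h (Finset.univ.filter fun i => k i ≠ 0), ∏ i ∈ S, k i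
        = ∑ S ∈ Finset.powersetCard h (Finset.univ : Finset (Fin n)), ∏ i ∈ S, k i := by
    intro k
    refine Finset.sum_subset (Finset.powersetCard_mono (Finset.subset_univ _)) ?_
    intro S hS hS'
    rw [Finset.mem_powersetCard] at hS hS'
    have hns : ¬ S ⊆ Finset.univ.filter fun i => k i ≠ 0 := fun hsub => hS' ⟨hsub, hS.2⟩
    obtain ⟨i, hiS, hins⟩ := Finset.not_subset.mp hns
    have h0 : k i = 0 := by
      by_contra h0
      exact hins (Finset.mem_filter.mpr ⟨Finset.mem_univ i, h0⟩)
    exact Finset.prod_eq_zero hiS h0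
  calc ((∑ i, q i) - h).choose (w - h) *
        ∑ S ∈ Finset.powersetCard h (Finset.univ : Finset (Fin n)), ∏ i ∈ S, q i
      = ∑ S ∈ Finset.powersetCard h (Finset.univ : Finset (Fin n)),
          ((∑ i, q i) - h).choose (w - h) * ∏ i ∈ S, q i := by rw [Finset.mul_sum]
    _ = ∑ S ∈ Finset.powersetCard h (Finset.univ : Finset (Fin n)),
          ∑ k ∈ Finset.Nat.antidiagonalTuple n w,
            (∏ i, (q i).choose (k i)) * ∏ i ∈ S, k i := by
        refine Finset.sum_congr rfl fun S hS => ?_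
        rw [Finset.mem_powersetCard] at hS
        exact (key_lemma n h w hw q S hS.2).symm
    _ = ∑ k ∈ Finset.Nat.antidiagonalTuple n w,
          ∑ S ∈ Finset.powersetCard h (Finset.univ : Finset (Fin n)),
            (∏ i, (q i).choose (k i)) * ∏ i ∈ S, k i := Finset.sum_comm
    _ = ∑ k ∈ Finset.Nat.antidiagonalTuple n w,
          (∏ i, (q i).choose (k i)) *
            (∑ S ∈ Finset.powersetCard h (Finset.univ.filter fun i => k i ≠ 0),
              ∏ i ∈ S, k i) := by
        refine Finset.sum_congr rfl fun k _ => ?_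
        rw [hinner k, Finset.mul_sum]
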